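/- Let m, n₁ be positive integers, n₂ an integer, and φ : (0,∞) → ℂ a function such that Σ_{d | gcd(m,n₁)} Σ_{q=1}^{∞} |S(1, m·n₁/d², n₂; q)| · |φ(4π√(m·n₁·n₂)/(q·d))| / q < ∞. Then Σ_{q=1}^{∞} (S(m,n₁,n₂;q)/q) · φ(4π√(m·n₁·n₂)/q) = Σ_{d | gcd(m,n₁)} Σ_{q=1}^{∞} (S(1, m·n₁/d², n₂; q)/q) · φ(4π√(m·n₁·n₂)/(q·d)), with both sides converging absolutely. -/

import Mathlib

/-- `e(x) = exp(2πix)`. -/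
noncomputable def e (x : ℝ) : ℂ := Complex.exp (2 * Real.pi * Complex.I * x)

/-- The generalized Kloosterman sum
`S(m,n₁,n₂;q) = Σ_{a=1}^{q} Σ_{b=1}^{q} δ_q(ab − m) · e((a·n₁ + b·n₂)/q)`. -/
noncomputable def Kl (m n₁ n₂ : ℤ) (q : ℕ) : ℂ :=
  ∑ a ∈ Finset.Icc 1 q, ∑ b ∈ Finset.Icc 1 q,
    (if (q : ℤ) ∣ ((a : ℤ) * (b : ℤ) - m) then (1 : ℂ) else 0) *
      e (((a : ℝ) * (n₁ : ℝ) + (b : ℝ) * (n₂ : ℝ)) / q)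

lemma e_add (x y : ℝ) : e (x + y) = e x * e y := by
  simp only [e, ← Complex.exp_add]
  push_cast
  ring_nf

lemma e_int (n : ℤ) : e n = 1 := by
  simp only [e]
  rw [show 2 * (Real.pi:ℂ) * Complex.I * (n:ℝ) = (n:ℤ) * (2 * Real.pi * Complex.I) by push_cast; ring]
  exact Complex.exp_int_mul_two_pi_mul_I n

lemma e_eq_of_dvd {q : ℕ} (hq : 0 < q) {j k : ℤ} (h : (q:ℤ) ∣ j - k) :
    e ((j:ℝ) / q) = e ((k:ℝ) / q) := by
  obtain ⟨t, ht⟩ := h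
  have : (j:ℝ) / q = (k:ℝ)/q + (t:ℤ) := by
    have hq0 : (q:ℝ) ≠ 0 := by positivity
    field_simp
    have : (j:ℝ) = k + q * t := by exact_mod_cast congrArg (Int.cast : ℤ → ℝ) (by linarith [ht] : j = k + q*t)
    linarith
  rw [this, e_add, e_int, mul_one]

lemma e_pow (x : ℝ) (n : ℕ) : e x ^ n = e (n * x) := by
  induction n with
  | zero => simp [e]
  | succ n ih =>
    rw [pow_succ, ih, ← e_add]
    congr 1
    push_cast
    ring

lemma e_eq_one_iff {q : ℕ} (hq : 0 < q) (c : ℤ) : e ((c:ℝ)/q) = 1 ↔ (q:ℤ) ∣ c := by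
  rw [e, Complex.exp_eq_one_iff]
  constructor
  · rintro ⟨n, hn⟩
    have hπ : (2 * Real.pi * Complex.I) ≠ 0 := by
      simp [Real.pi_ne_zero, Complex.I_ne_zero]
    have : ((c:ℝ)/q : ℂ) = (n : ℂ) := by
      have hn' : ((c:ℝ)/q : ℂ) * (2 * Real.pi * Complex.I) = (n:ℂ) * (2 * Real.pi * Complex.I) := by
        rw [← hn]; push_cast; field_simp
      exact mul_right_cancel₀ hπ hn' 
    have h2 : (c:ℝ)/q = (n:ℝ) := by exact_mod_cast this
    refine ⟨n, ?_⟩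
    have hq0 : (q:ℝ) ≠ 0 := by positivity
    field_simp at h2
    have : c = n * (q:ℤ) := by rw [mul_comm]; exact_mod_cast h2
    linarith
  · rintro ⟨t, ht⟩
    refine ⟨t, ?_⟩
    subst ht
    have hq0 : (q:ℝ) ≠ 0 := by positivity
    have h2 : (((q:ℤ) * t : ℤ) : ℝ)/q = (t:ℝ) := by push_cast; field_simp
    rw [h2]
    push_cast
    ring

lemma char_sum {d : ℕ} (hd : 0 < d) (c : ℤ) :
    ∑ t ∈ Finset.range d, e ((t:ℝ) * c / d) = if (d:ℤ) ∣ c then (d:ℂ) else 0 := by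
  have hterm : ∀ t : ℕ, e ((t:ℝ) * c / d) = e ((c:ℝ)/d) ^ t := by
    intro t; rw [e_pow]; ring_nf
  simp only [hterm]
  by_cases h : (d:ℤ) ∣ c
  · rw [if_pos h]
    have h1 : e ((c:ℝ)/d) = 1 := (e_eq_one_iff hd c).2 h
    simp [h1]
  · rw [if_neg h]
    have h1 : e ((c:ℝ)/d) ≠ 1 := fun hc => h ((e_eq_one_iff hd c).1 hc)
    rw [geom_sum_eq h1]
    have : e ((c:ℝ)/d) ^ d = 1 := by
      rw [e_pow]
      have : (d:ℝ) * ((c:ℝ)/d) = (c:ℤ) := by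
        have hq0 : (d:ℝ) ≠ 0 := by positivity
        field_simp
      rw [this, e_int]
    simp [this]

open Finset

/-- Reduce an integer into `Icc 1 q` modulo `q`. -/
def red (q : ℕ) (k : ℤ) : ℕ := ((k - 1).emod q).toNat + 1

lemma red_mem {q : ℕ} (hq : 0 < q) (k : ℤ) : red q k ∈ Icc 1 q := by
  have h1 : 0 ≤ (k - 1).emod q := Int.emod_nonneg _ (by exact_mod_cast hq.ne')
  have h2 : (k - 1).emod q < q := Int.emod_lt_of_pos _ (by exact_mod_cast hq)
  simp only [red, mem_Icc]
  omega

lemma red_congr {q : ℕ} (hq : 0 < q) (k : ℤ) : (q:ℤ) ∣ (red q k : ℤ) - k := by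
  have h1 : 0 ≤ (k - 1).emod q := Int.emod_nonneg _ (by exact_mod_cast hq.ne')
  have h2 : ((red q k : ℤ)) = (k-1).emod q + 1 := by simp [red]; omega
  have hme : (k-1) % (q:ℤ) ≡ (k-1) [ZMOD (q:ℤ)] := Int.emod_emod_of_dvd (k-1) dvd_rfl
  have h3 : (q:ℤ) ∣ (k-1).emod q - (k-1) := by
    have := hme.symm.dvd
    exact this
  rw [h2]
  have : (k-1).emod q + 1 - k = (k-1).emod q - (k-1) := by ring
  rw [this]; exact h3

lemma icc_unique {q a b : ℕ} (ha : a ∈ Icc 1 q) (hb : b ∈ Icc 1 q)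
    (h : (q:ℤ) ∣ (a:ℤ) - b) : a = b := by
  simp only [mem_Icc] at ha hb
  have := Int.eq_zero_of_abs_lt_dvd h (by
    rw [abs_sub_lt_iff]
    constructor <;> (push_cast; omega))
  omega

lemma sum_group {q : ℕ} (hq : 0 < q) (F : ℕ → ℂ) :
    ∑ b ∈ Icc 1 q, F b
      = ∑ d ∈ q.divisors, ∑ β ∈ (Icc 1 (q/d)).filter (fun β => Nat.gcd β (q/d) = 1),
          F (d * β) := by
  rw [← Finset.sum_sigma (q.divisors) (fun d => (Icc 1 (q/d)).filter (fun β => Nat.gcd β (q/d) = 1)) (fun x => F (x.1 * x.2))]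
  refine Finset.sum_nbij' (fun b => ⟨Nat.gcd b q, b / Nat.gcd b q⟩)
    (fun x => x.1 * x.2) ?_ ?_ ?_ ?_ ?_
  · intro b hb
    simp only [mem_Icc] at hb
    have hg : 0 < Nat.gcd b q := Nat.gcd_pos_of_pos_right _ hq
    have hgb : Nat.gcd b q ∣ b := Nat.gcd_dvd_left _ _
    have hgq : Nat.gcd b q ∣ q := Nat.gcd_dvd_right _ _
    simp only [Finset.mem_sigma, Nat.mem_divisors, mem_filter, mem_Icc]
    refine ⟨⟨hgq, hq.ne'⟩, ⟨Nat.one_le_div_iff hg |>.2 (Nat.le_of_dvd (by omega) hgb), Nat.div_le_div_right hb.2⟩, ?_⟩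
    exact Nat.coprime_div_gcd_div_gcd hg
  · rintro ⟨d, β⟩ hx
    simp only [Finset.mem_sigma, Nat.mem_divisors, mem_filter, mem_Icc] at hx
    obtain ⟨⟨hdq, -⟩, ⟨hβ1, hβ2⟩, -⟩ := hx
    have hd : 0 < d := Nat.pos_of_dvd_of_pos hdq hq
    simp only [mem_Icc]
    constructor
    · exact Nat.one_le_iff_ne_zero.2 (by positivity)
    · calc d * β ≤ d * (q/d) := Nat.mul_le_mul_left d hβ2
        _ = q := Nat.mul_div_cancel' hdq
  · intro b hb
    simp only [mem_Icc] at hb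
    exact Nat.mul_div_cancel' (Nat.gcd_dvd_left _ _)
  · rintro ⟨d, β⟩ hx
    simp only [Finset.mem_sigma, Nat.mem_divisors, mem_filter, mem_Icc] at hx
    obtain ⟨⟨hdq, -⟩, ⟨hβ1, hβ2⟩, hcop⟩ := hx
    have hd : 0 < d := Nat.pos_of_dvd_of_pos hdq hq
    have hkey : Nat.gcd (d * β) q = d := by
      conv_lhs => rw [← Nat.mul_div_cancel' hdq]
      rw [Nat.gcd_mul_left]
      rw [hcop]
      simp
    ext
    · simp [hkey]
    · simp only [hkey]
      rw [Nat.mul_div_cancel_left _ hd]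
  · intro b hb
    simp only
    rw [Nat.mul_div_cancel' (Nat.gcd_dvd_left _ _)]

lemma inner_a {d q' : ℕ} (hd : 0 < d) (hq' : 0 < q') (m n₁ n₂ β : ℕ) :
    ∑ a ∈ Icc 1 (d * q'),
      (if ((d * q' : ℕ):ℤ) ∣ (a:ℤ) * ((d * β : ℕ):ℤ) - (m:ℤ) then (1:ℂ) else 0) *
        e (((a:ℝ) * (n₁:ℝ) + ((d * β : ℕ):ℝ) * (n₂:ℝ)) / ((d * q' : ℕ):ℝ))
    = if d ∣ m ∧ d ∣ n₁ then
        (d:ℂ) * ∑ α ∈ Icc 1 q',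
          (if (q':ℤ) ∣ (α:ℤ) * (β:ℤ) - ((m / d : ℕ):ℤ) then (1:ℂ) else 0) *
            e (((α:ℝ) * (n₁:ℝ) + ((d * β : ℕ):ℝ) * (n₂:ℝ)) / ((d * q' : ℕ):ℝ))
      else 0 := by
  have hdq : 0 < d * q' := Nat.mul_pos hd hq'
  -- Step 1: reindex a = α + t * q'
  have step1 : ∑ a ∈ Icc 1 (d * q'),
      (if ((d * q' : ℕ):ℤ) ∣ (a:ℤ) * ((d * β : ℕ):ℤ) - (m:ℤ) then (1:ℂ) else 0) *
        e (((a:ℝ) * (n₁:ℝ) + ((d * β : ℕ):ℝ) * (n₂:ℝ)) / ((d * q' : ℕ):ℝ))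
      = ∑ α ∈ Icc 1 q', ∑ t ∈ Finset.range d,
          (if ((d * q' : ℕ):ℤ) ∣ ((α + t * q' : ℕ):ℤ) * ((d * β : ℕ):ℤ) - (m:ℤ) then (1:ℂ) else 0) *
            e ((((α + t * q' : ℕ):ℝ) * (n₁:ℝ) + ((d * β : ℕ):ℝ) * (n₂:ℝ)) / ((d * q' : ℕ):ℝ)) := by
    refine Eq.trans ?_ (Finset.sum_product (s := Icc 1 q') (t := Finset.range d)
      (f := fun p => (if ((d * q' : ℕ):ℤ) ∣ ((p.1 + p.2 * q' : ℕ):ℤ) * ((d * β : ℕ):ℤ) - (m:ℤ) then (1:ℂ) else 0) *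
            e ((((p.1 + p.2 * q' : ℕ):ℝ) * (n₁:ℝ) + ((d * β : ℕ):ℝ) * (n₂:ℝ)) / ((d * q' : ℕ):ℝ))))
    refine Finset.sum_nbij' (fun a => ((a - 1) % q' + 1, (a - 1) / q'))
      (fun p => p.1 + p.2 * q') ?_ ?_ ?_ ?_ ?_
    · intro a ha
      simp only [mem_Icc] at ha
      simp only [Finset.mem_product, mem_Icc, Finset.mem_range]
      have h1 : (a - 1) % q' < q' := Nat.mod_lt _ hq'
      refine ⟨⟨by omega, by omega⟩, ?_⟩
      exact Nat.div_lt_iff_lt_mul hq' |>.2 (by omega)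
    · rintro ⟨α, t⟩ hp
      simp only [Finset.mem_product, mem_Icc, Finset.mem_range] at hp
      simp only [mem_Icc]
      obtain ⟨⟨h1, h2⟩, h3⟩ := hp
      constructor
      · omega
      · calc α + t * q' ≤ q' + t * q' := Nat.add_le_add_right h2 _
          _ = (t + 1) * q' := by ring
          _ ≤ d * q' := Nat.mul_le_mul_right q' (by omega)
    · intro a ha
      simp only [mem_Icc] at ha
      simp only
      have h := Nat.mod_add_div (a - 1) q'
      have hcomm : q' * ((a - 1) / q') = ((a - 1) / q') * q' := Nat.mul_comm _ _
      omega
    · rintro ⟨α, t⟩ hp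
      simp only [Finset.mem_product, mem_Icc, Finset.mem_range] at hp
      obtain ⟨⟨h1, h2⟩, h3⟩ := hp
      have hsub : α + t * q' - 1 = (α - 1) + t * q' := by omega
      have hmod : ((α - 1) + t * q') % q' = α - 1 := by
        rw [Nat.add_mul_mod_self_right]
        exact Nat.mod_eq_of_lt (by omega)
      have hdiv : ((α - 1) + t * q') / q' = t := by
        rw [Nat.add_mul_div_right _ _ hq', Nat.div_eq_of_lt (by omega)]
        omega
      ext
      · simp only [hsub, hmod]; omega
      · simp only [hsub, hdiv]
    · intro a ha
      simp only [mem_Icc] at ha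
      have h := Nat.mod_add_div (a - 1) q'
      have hcomm : q' * ((a - 1) / q') = ((a - 1) / q') * q' := Nat.mul_comm _ _
      have hfix : (a - 1) % q' + 1 + (a - 1) / q' * q' = a := by omega
      simp only [hfix]
  rw [step1]
  -- Step 2: simplify the summand over t
  have step2 : ∀ α ∈ Icc 1 q', ∀ t ∈ Finset.range d,
      (if ((d * q' : ℕ):ℤ) ∣ ((α + t * q' : ℕ):ℤ) * ((d * β : ℕ):ℤ) - (m:ℤ) then (1:ℂ) else 0) *
        e ((((α + t * q' : ℕ):ℝ) * (n₁:ℝ) + ((d * β : ℕ):ℝ) * (n₂:ℝ)) / ((d * q' : ℕ):ℝ))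
      = ((if ((d * q' : ℕ):ℤ) ∣ (α:ℤ) * ((d * β : ℕ):ℤ) - (m:ℤ) then (1:ℂ) else 0) *
          e (((α:ℝ) * (n₁:ℝ) + ((d * β : ℕ):ℝ) * (n₂:ℝ)) / ((d * q' : ℕ):ℝ))) *
          e ((t:ℝ) * (n₁:ℤ) / d) := by
    intro α hα t ht
    have hδ : (((d * q' : ℕ):ℤ) ∣ ((α + t * q' : ℕ):ℤ) * ((d * β : ℕ):ℤ) - (m:ℤ))
        ↔ (((d * q' : ℕ):ℤ) ∣ (α:ℤ) * ((d * β : ℕ):ℤ) - (m:ℤ)) := by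
      have hkey : ((α + t * q' : ℕ):ℤ) * ((d * β : ℕ):ℤ) - (m:ℤ)
          = ((α:ℤ) * ((d * β : ℕ):ℤ) - (m:ℤ)) + ((d * q' : ℕ):ℤ) * (t * β) := by
        push_cast; ring
      rw [hkey]
      constructor
      · intro h
        have h2 : ((d * q' : ℕ):ℤ) ∣ ((d * q' : ℕ):ℤ) * ((t:ℤ) * β) := Dvd.intro _ rfl
        have := dvd_sub h h2
        simpa using this
      · intro h
        exact dvd_add h (Dvd.intro _ rfl)
    have he : ((((α + t * q' : ℕ):ℝ) * (n₁:ℝ) + ((d * β : ℕ):ℝ) * (n₂:ℝ)) / ((d * q' : ℕ):ℝ))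
        = (((α:ℝ) * (n₁:ℝ) + ((d * β : ℕ):ℝ) * (n₂:ℝ)) / ((d * q' : ℕ):ℝ)) + ((t:ℝ) * (n₁:ℤ) / d) := by
      have hd0 : (d:ℝ) ≠ 0 := by positivity
      have hq0 : (q':ℝ) ≠ 0 := by positivity
      push_cast
      field_simp
      ring
    simp only [he, e_add, hδ]
    ring
  rw [Finset.sum_congr rfl (fun α hα => Finset.sum_congr rfl (step2 α hα))]
  -- Step 3: evaluate the t-sum via the character sum
  have step3 : ∀ α ∈ Icc 1 q',
      ∑ t ∈ Finset.range d,
        ((if ((d * q' : ℕ):ℤ) ∣ (α:ℤ) * ((d * β : ℕ):ℤ) - (m:ℤ) then (1:ℂ) else 0) *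
          e (((α:ℝ) * (n₁:ℝ) + ((d * β : ℕ):ℝ) * (n₂:ℝ)) / ((d * q' : ℕ):ℝ))) *
          e ((t:ℝ) * (n₁:ℤ) / d)
      = ((if ((d * q' : ℕ):ℤ) ∣ (α:ℤ) * ((d * β : ℕ):ℤ) - (m:ℤ) then (1:ℂ) else 0) *
          e (((α:ℝ) * (n₁:ℝ) + ((d * β : ℕ):ℝ) * (n₂:ℝ)) / ((d * q' : ℕ):ℝ))) *
          (if (d:ℤ) ∣ (n₁:ℤ) then (d:ℂ) else 0) := by
    intro α hα
    rw [← Finset.mul_sum, char_sum hd (n₁:ℤ)]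
  rw [Finset.sum_congr rfl step3]
  -- Step 4: case analysis
  by_cases hdn₁ : d ∣ n₁
  · by_cases hdm : d ∣ m
    · rw [if_pos (show d ∣ m ∧ d ∣ n₁ from ⟨hdm, hdn₁⟩),
        if_pos (show (d:ℤ) ∣ (n₁:ℤ) from by exact_mod_cast hdn₁), Finset.mul_sum]
      refine Finset.sum_congr rfl (fun α hα => ?_)
      have hδ : (((d * q' : ℕ):ℤ) ∣ (α:ℤ) * ((d * β : ℕ):ℤ) - (m:ℤ))
          ↔ ((q':ℤ) ∣ (α:ℤ) * (β:ℤ) - ((m / d : ℕ):ℤ)) := by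
        obtain ⟨m', rfl⟩ := hdm
        rw [Nat.mul_div_cancel_left _ hd]
        have h1 : (α:ℤ) * ((d * β : ℕ):ℤ) - ((d * m' : ℕ):ℤ) = (d:ℤ) * ((α:ℤ) * β - m') := by
          push_cast; ring
        have h2 : ((d * q' : ℕ):ℤ) = (d:ℤ) * q' := by push_cast; ring
        rw [h1, h2]
        exact mul_dvd_mul_iff_left (show (d:ℤ) ≠ 0 from by exact_mod_cast hd.ne')
      simp only [hδ]
      ring
    · rw [if_neg (show ¬(d ∣ m ∧ d ∣ n₁) from fun h => hdm h.1)]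
      refine Finset.sum_eq_zero (fun α hα => ?_)
      have hδ : ¬ (((d * q' : ℕ):ℤ) ∣ (α:ℤ) * ((d * β : ℕ):ℤ) - (m:ℤ)) := by
        intro h
        apply hdm
        have hd1 : (d:ℤ) ∣ (α:ℤ) * ((d * β : ℕ):ℤ) - (m:ℤ) :=
          dvd_trans ⟨q', by push_cast; ring⟩ h
        have hd2 : (d:ℤ) ∣ (α:ℤ) * ((d * β : ℕ):ℤ) := ⟨α * β, by push_cast; ring⟩
        have h3 : (d:ℤ) ∣ (m:ℤ) := by
          have := dvd_sub hd2 hd1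
          simpa using this
        exact_mod_cast h3
      rw [if_neg hδ]
      ring
  · rw [if_neg (show ¬(d ∣ m ∧ d ∣ n₁) from fun h => hdn₁ h.2),
      if_neg (show ¬((d:ℤ) ∣ (n₁:ℤ)) from by exact_mod_cast hdn₁)]
    exact Finset.sum_eq_zero (fun α hα => by ring)

lemma modeq_of_dvd'' {n a b : ℤ} (h : n ∣ a - b) : a ≡ b [ZMOD n] :=
  (Int.modEq_iff_dvd.mpr h).symm

lemma modeq_dvd' {n a b : ℤ} (h : a ≡ b [ZMOD n]) : n ∣ a - b :=
  dvd_sub_comm.mp h.dvd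

lemma red_modeq {q : ℕ} (hq : 0 < q) (k : ℤ) : ((red q k : ℕ):ℤ) ≡ k [ZMOD (q:ℤ)] :=
  modeq_of_dvd'' (red_congr hq k)

lemma icc_unique' {q a b : ℕ} (ha : a ∈ Icc 1 q) (hb : b ∈ Icc 1 q)
    (h : ((a:ℕ):ℤ) ≡ (b:ℤ) [ZMOD (q:ℤ)]) : a = b :=
  icc_unique ha hb (modeq_dvd' h)

lemma unit_sum {q' d : ℕ} (hq' : 0 < q') (hd : 0 < d) {β : ℕ} (hβ : Nat.Coprime β q')
    (m' n₁' n₂ : ℕ) :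
    ∑ α ∈ Icc 1 q',
      (if (q':ℤ) ∣ (α:ℤ) * (β:ℤ) - (m':ℤ) then (1:ℂ) else 0) *
        e (((α:ℝ) * ((d * n₁' : ℕ):ℝ) + ((d * β : ℕ):ℝ) * (n₂:ℝ)) / ((d * q' : ℕ):ℝ))
    = ∑ α ∈ Icc 1 q',
      (if (q':ℤ) ∣ (α:ℤ) * (β:ℤ) - 1 then (1:ℂ) else 0) *
        e (((α:ℝ) * ((m' * n₁' : ℕ):ℝ) + (β:ℝ) * (n₂:ℝ)) / (q':ℝ)) := by
  classical
  -- the inverse of β mod q'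
  set u : ℤ := Int.gcdA (β:ℤ) (q':ℤ) with hu_def
  have hβu : (β:ℤ) * u ≡ 1 [ZMOD (q':ℤ)] := by
    have hg : (Int.gcd (β:ℤ) (q':ℤ) : ℤ) = 1 := by
      have : Int.gcd (β:ℤ) (q':ℤ) = Nat.gcd β q' := by
        simp [Int.gcd_natCast_natCast]
      rw [this, hβ]
      simp
    have := Int.gcd_eq_gcd_ab (β:ℤ) (q':ℤ)
    rw [hg] at this
    have hdvd : (q':ℤ) ∣ 1 - (β:ℤ) * u := ⟨Int.gcdB (β:ℤ) (q':ℤ), by linarith⟩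
    rwa [← Int.modEq_iff_dvd] at hdvd
  simp only [ite_mul, one_mul, zero_mul]
  rw [← Finset.sum_filter, ← Finset.sum_filter]
  refine Finset.sum_nbij' (fun _ => red q' u) (fun α' => red q' ((m':ℤ) * α')) ?_ ?_ ?_ ?_ ?_
  · intro α hα
    simp only [mem_filter] at hα ⊢
    refine ⟨red_mem hq' u, ?_⟩
    have h1 : ((red q' u : ℕ):ℤ) * β ≡ u * β [ZMOD (q':ℤ)] := (red_modeq hq' u).mul_right _
    have h2 : ((red q' u : ℕ):ℤ) * β ≡ 1 [ZMOD (q':ℤ)] := h1.trans (by rwa [mul_comm] at hβu)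
    exact modeq_dvd' h2
  · intro α' hα'
    simp only [mem_filter] at hα' ⊢
    refine ⟨red_mem hq' _, ?_⟩
    have hα'β : (α':ℤ) * β ≡ 1 [ZMOD (q':ℤ)] := modeq_of_dvd'' hα'.2
    have h1 : ((red q' ((m':ℤ) * α') : ℕ):ℤ) * β ≡ (m':ℤ) * α' * β [ZMOD (q':ℤ)] :=
      (red_modeq hq' _).mul_right _
    have h2 : (m':ℤ) * α' * β ≡ (m':ℤ) * 1 [ZMOD (q':ℤ)] := by
      have := hα'β.mul_left (m':ℤ)
      rwa [← mul_assoc] at this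
    exact modeq_dvd' (h1.trans (h2.trans (by rw [mul_one])))
  · intro α hα
    simp only [mem_filter] at hα
    have hαβ : (α:ℤ) * β ≡ (m':ℤ) [ZMOD (q':ℤ)] := modeq_of_dvd'' hα.2
    refine icc_unique' (red_mem hq' _) hα.1 ?_
    have h1 : ((red q' ((m':ℤ) * (red q' u : ℕ)) : ℕ):ℤ) ≡ (m':ℤ) * (red q' u : ℕ) [ZMOD (q':ℤ)] :=
      red_modeq hq' _
    have h2 : (m':ℤ) * ((red q' u : ℕ):ℤ) ≡ (m':ℤ) * u [ZMOD (q':ℤ)] := (red_modeq hq' u).mul_left _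
    have h3 : (α:ℤ) ≡ (m':ℤ) * u [ZMOD (q':ℤ)] := by
      calc (α:ℤ) ≡ (α:ℤ) * ((β:ℤ) * u) [ZMOD (q':ℤ)] := by
            have := hβu.mul_left (α:ℤ)
            simpa using this.symm
        _ = (α:ℤ) * β * u := by ring
        _ ≡ (m':ℤ) * u [ZMOD (q':ℤ)] := hαβ.mul_right u
    exact h1.trans (h2.trans h3.symm)
  · intro α' hα'
    simp only [mem_filter] at hα'
    have hα'β : (α':ℤ) * β ≡ 1 [ZMOD (q':ℤ)] := modeq_of_dvd'' hα'.2
    refine icc_unique' (red_mem hq' _) hα'.1 ?_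
    calc ((red q' u : ℕ):ℤ) ≡ u [ZMOD (q':ℤ)] := red_modeq hq' u
      _ ≡ u * ((α':ℤ) * β) [ZMOD (q':ℤ)] := by
          have := hα'β.mul_left u
          simpa using this.symm
      _ = (α':ℤ) * ((β:ℤ) * u) := by ring
      _ ≡ (α':ℤ) * 1 [ZMOD (q':ℤ)] := hβu.mul_left _
      _ = (α':ℤ) := by ring
  · intro α hα
    simp only [mem_filter] at hα
    have hαβ : (α:ℤ) * β ≡ (m':ℤ) [ZMOD (q':ℤ)] := modeq_of_dvd'' hα.2
    have hd0 : (d:ℝ) ≠ 0 := by positivity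
    have hq0 : (q':ℝ) ≠ 0 := by positivity
    have lhs_eq : ((α:ℝ) * ((d * n₁' : ℕ):ℝ) + ((d * β : ℕ):ℝ) * (n₂:ℝ)) / ((d * q' : ℕ):ℝ)
        = ((((α:ℤ) * n₁' + (β:ℤ) * n₂ : ℤ)):ℝ) / (q':ℝ) := by
      push_cast
      field_simp
    have rhs_eq : (((red q' u : ℕ):ℝ) * ((m' * n₁' : ℕ):ℝ) + (β:ℝ) * (n₂:ℝ)) / (q':ℝ)
        = (((((red q' u : ℕ):ℤ) * ((m':ℤ) * n₁') + (β:ℤ) * n₂ : ℤ)):ℝ) / (q':ℝ) := by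
      push_cast
      ring_nf
    rw [lhs_eq, rhs_eq]
    refine e_eq_of_dvd hq' ?_
    have h3 : (α:ℤ) ≡ ((red q' u : ℕ):ℤ) * (m':ℤ) [ZMOD (q':ℤ)] := by
      calc (α:ℤ) ≡ (α:ℤ) * ((β:ℤ) * u) [ZMOD (q':ℤ)] := by
            have := hβu.mul_left (α:ℤ)
            simpa using this.symm
        _ = (α:ℤ) * β * u := by ring
        _ ≡ (m':ℤ) * u [ZMOD (q':ℤ)] := hαβ.mul_right u
        _ ≡ (m':ℤ) * ((red q' u : ℕ):ℤ) [ZMOD (q':ℤ)] := ((red_modeq hq' u).mul_left _).symm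
        _ = ((red q' u : ℕ):ℤ) * (m':ℤ) := by ring
    have h4 : (α:ℤ) * n₁' ≡ ((red q' u : ℕ):ℤ) * (m':ℤ) * n₁' [ZMOD (q':ℤ)] := h3.mul_right _
    have h5 := h4.dvd
    have heq : (((red q' u : ℕ):ℤ) * ((m':ℤ) * n₁') + (β:ℤ) * n₂) - ((α:ℤ) * n₁' + (β:ℤ) * n₂)
        = ((red q' u : ℕ):ℤ) * (m':ℤ) * n₁' - (α:ℤ) * n₁' := by ring
    rw [show ((α:ℤ) * n₁' + (β:ℤ) * n₂) - (((red q' u : ℕ):ℤ) * ((m':ℤ) * n₁') + (β:ℤ) * n₂)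
        = -(((red q' u : ℕ):ℤ) * (m':ℤ) * n₁' - (α:ℤ) * n₁') from by ring]
    exact dvd_neg.2 h5


lemma per_d (m n₁ n₂ : ℕ) {d q' : ℕ} (hd : 0 < d) (hq' : 0 < q') :
    ∑ β ∈ (Icc 1 q').filter (fun β => Nat.gcd β q' = 1),
      ∑ a ∈ Icc 1 (d * q'),
        (if ((d * q' : ℕ):ℤ) ∣ (a:ℤ) * ((d * β : ℕ):ℤ) - (m:ℤ) then (1:ℂ) else 0) *
          e (((a:ℝ) * (n₁:ℝ) + ((d * β : ℕ):ℝ) * (n₂:ℝ)) / ((d * q' : ℕ):ℝ))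
    = if d ∣ m ∧ d ∣ n₁ then (d:ℂ) * Kl 1 ((m * n₁ / d^2 : ℕ):ℤ) (n₂:ℤ) q' else 0 := by
  rw [Finset.sum_congr rfl (fun β _ => inner_a hd hq' m n₁ n₂ β)]
  by_cases hcond : d ∣ m ∧ d ∣ n₁
  · obtain ⟨hdm, hdn₁⟩ := hcond
    rw [if_pos ⟨hdm, hdn₁⟩]
    simp only [if_pos (⟨hdm, hdn₁⟩ : d ∣ m ∧ d ∣ n₁)]
    obtain ⟨m', rfl⟩ := hdm
    obtain ⟨n₁', rfl⟩ := hdn₁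
    have hm' : (d * m') / d = m' := Nat.mul_div_cancel_left _ hd
    have hM : (d * m') * (d * n₁') / d^2 = m' * n₁' := by
      rw [show (d * m') * (d * n₁') = d^2 * (m' * n₁') from by ring]
      exact Nat.mul_div_cancel_left _ (by positivity)
    rw [hm', hM]
    -- apply unit_sum per β
    have huni : ∀ β ∈ (Icc 1 q').filter (fun β => Nat.gcd β q' = 1),
        (d:ℂ) * ∑ α ∈ Icc 1 q',
          (if (q':ℤ) ∣ (α:ℤ) * (β:ℤ) - (m':ℤ) then (1:ℂ) else 0) *
            e (((α:ℝ) * ((d * n₁' : ℕ):ℝ) + ((d * β : ℕ):ℝ) * (n₂:ℝ)) / ((d * q' : ℕ):ℝ))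
        = (d:ℂ) * ∑ α ∈ Icc 1 q',
          (if (q':ℤ) ∣ (α:ℤ) * (β:ℤ) - 1 then (1:ℂ) else 0) *
            e (((α:ℝ) * ((m' * n₁' : ℕ):ℝ) + (β:ℝ) * (n₂:ℝ)) / (q':ℝ)) := by
      intro β hβ
      simp only [mem_filter] at hβ
      rw [unit_sum hq' hd hβ.2 m' n₁' n₂]
    rw [Finset.sum_congr rfl huni, ← Finset.mul_sum]
    congr 1
    -- now show the β-sum equals Kl 1 (m'*n₁') n₂ q'
    have h1 : ∑ β ∈ (Icc 1 q').filter (fun β => Nat.gcd β q' = 1),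
        ∑ α ∈ Icc 1 q', (if (q':ℤ) ∣ (α:ℤ) * (β:ℤ) - 1 then (1:ℂ) else 0) *
          e (((α:ℝ) * ((m' * n₁' : ℕ):ℝ) + (β:ℝ) * (n₂:ℝ)) / (q':ℝ))
        = ∑ β ∈ Icc 1 q',
        ∑ α ∈ Icc 1 q', (if (q':ℤ) ∣ (α:ℤ) * (β:ℤ) - 1 then (1:ℂ) else 0) *
          e (((α:ℝ) * ((m' * n₁' : ℕ):ℝ) + (β:ℝ) * (n₂:ℝ)) / (q':ℝ)) := by
      apply Finset.sum_filter_of_ne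
      intro β hβ hne
      -- if gcd β q' ≠ 1 then all δ's vanish
      by_contra hg
      apply hne
      refine Finset.sum_eq_zero (fun α hα => ?_)
      have hnd : ¬ ((q':ℤ) ∣ (α:ℤ) * (β:ℤ) - 1) := by
        intro hdvd
        apply hg
        have hg1 : (Nat.gcd β q' : ℤ) ∣ (α:ℤ) * β := by
          have hx : (Nat.gcd β q' : ℤ) ∣ (β:ℤ) := by exact_mod_cast Nat.gcd_dvd_left β q'
          exact hx.mul_left _
        have h2 : (Nat.gcd β q' : ℤ) ∣ (q':ℤ) := by exact_mod_cast Nat.gcd_dvd_right β q'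
        have h3 : (Nat.gcd β q' : ℤ) ∣ (1:ℤ) := by
          have h4 := dvd_sub hg1 (h2.trans hdvd)
          simpa using h4
        have h5 := Int.eq_one_of_dvd_one (by positivity) h3
        exact_mod_cast h5
      rw [if_neg hnd, zero_mul]
    rw [h1]
    rw [Kl]
    simp only [Int.cast_one, Int.cast_natCast]
    exact Finset.sum_comm
  · rw [if_neg hcond]
    simp only [if_neg hcond]
    exact Finset.sum_eq_zero (fun β _ => rfl)

lemma selberg {m n₁ n₂ q : ℕ} (hm : 0 < m) (hq : 0 < q) :
    Kl (m:ℤ) (n₁:ℤ) (n₂:ℤ) q = ∑ d ∈ (Nat.gcd m n₁).divisors,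
      if d ∣ q then (d:ℂ) * Kl 1 ((m * n₁ / d^2 : ℕ):ℤ) (n₂:ℤ) (q / d) else 0 := by
  rw [Kl, Finset.sum_comm]
  simp only [Int.cast_natCast]
  rw [sum_group hq (fun b => ∑ a ∈ Icc 1 q,
    (if (q:ℤ) ∣ (a:ℤ) * (b:ℤ) - (m:ℤ) then (1:ℂ) else 0) *
      e (((a:ℝ) * (n₁:ℝ) + (b:ℝ) * (n₂:ℝ)) / (q:ℝ)))]
  have hstep : ∀ d ∈ q.divisors,
      (∑ β ∈ (Icc 1 (q/d)).filter (fun β => Nat.gcd β (q/d) = 1),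
        ∑ a ∈ Icc 1 q,
          (if (q:ℤ) ∣ (a:ℤ) * ((d * β : ℕ):ℤ) - (m:ℤ) then (1:ℂ) else 0) *
            e (((a:ℝ) * (n₁:ℝ) + ((d * β : ℕ):ℝ) * (n₂:ℝ)) / (q:ℝ)))
      = if d ∣ m ∧ d ∣ n₁ then (d:ℂ) * Kl 1 ((m * n₁ / d^2 : ℕ):ℤ) (n₂:ℤ) (q/d) else 0 := by
    intro d hd
    simp only [Nat.mem_divisors] at hd
    have hdpos : 0 < d := Nat.pos_of_dvd_of_pos hd.1 hq
    have hq'pos : 0 < q / d := Nat.div_pos (Nat.le_of_dvd hq hd.1) hdpos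
    have hqd : q = d * (q / d) := (Nat.mul_div_cancel' hd.1).symm
    calc (∑ β ∈ (Icc 1 (q/d)).filter (fun β => Nat.gcd β (q/d) = 1),
        ∑ a ∈ Icc 1 q,
          (if (q:ℤ) ∣ (a:ℤ) * ((d * β : ℕ):ℤ) - (m:ℤ) then (1:ℂ) else 0) *
            e (((a:ℝ) * (n₁:ℝ) + ((d * β : ℕ):ℝ) * (n₂:ℝ)) / (q:ℝ)))
        = ∑ β ∈ (Icc 1 (q/d)).filter (fun β => Nat.gcd β (q/d) = 1),
          ∑ a ∈ Icc 1 (d * (q/d)),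
            (if ((d * (q/d) : ℕ):ℤ) ∣ (a:ℤ) * ((d * β : ℕ):ℤ) - (m:ℤ) then (1:ℂ) else 0) *
              e (((a:ℝ) * (n₁:ℝ) + ((d * β : ℕ):ℝ) * (n₂:ℝ)) / ((d * (q/d) : ℕ):ℝ)) := by
          rw [← hqd]
      _ = _ := per_d m n₁ n₂ hdpos hq'pos
  rw [Finset.sum_congr rfl hstep]
  -- convert the sum over q.divisors to one over (gcd m n₁).divisors
  rw [← Finset.sum_filter, ← Finset.sum_filter]
  apply Finset.sum_congr _ (fun _ _ => rfl)
  ext d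
  simp only [mem_filter, Nat.mem_divisors]
  constructor
  · rintro ⟨⟨hdq, -⟩, hdm, hdn₁⟩
    exact ⟨⟨Nat.dvd_gcd hdm hdn₁, Nat.gcd_ne_zero_left hm.ne'⟩, hdq⟩
  · rintro ⟨⟨hdg, -⟩, hdq⟩
    exact ⟨⟨hdq, hq.ne'⟩, hdg.trans (Nat.gcd_dvd_left _ _), hdg.trans (Nat.gcd_dvd_right _ _)⟩

open Classical in
/-- The `d`-summand of the right-hand side. -/
noncomputable def gKl (m n₁ n₂ : ℕ) (φ : ℝ → ℂ) (d q : ℕ) : ℂ :=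
  Kl 1 ((m * n₁ / d ^ 2 : ℕ) : ℤ) (n₂ : ℤ) (q + 1) / ((q + 1 : ℕ) : ℂ) *
    φ (4 * Real.pi * Real.sqrt ((m : ℝ) * n₁ * n₂) / (((q : ℝ) + 1) * d))

open Classical in
noncomputable def hKl (m n₁ n₂ : ℕ) (φ : ℝ → ℂ) (d q : ℕ) : ℂ :=
  if d ∣ (q + 1) then gKl m n₁ n₂ φ d ((q + 1) / d - 1) else 0

lemma iota_inj {d : ℕ} (hd : 0 < d) : Function.Injective (fun n => d * (n + 1) - 1) := by
  intro a b hab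
  simp only at hab
  have h1 : 1 ≤ d * (a + 1) := Nat.one_le_iff_ne_zero.2 (by positivity)
  have h2 : 1 ≤ d * (b + 1) := Nat.one_le_iff_ne_zero.2 (by positivity)
  have : d * (a + 1) = d * (b + 1) := by omega
  have := Nat.eq_of_mul_eq_mul_left hd this
  omega

lemma hKl_comp (m n₁ n₂ : ℕ) (φ : ℝ → ℂ) {d : ℕ} (hd : 0 < d) (n : ℕ) :
    hKl m n₁ n₂ φ d (d * (n + 1) - 1) = gKl m n₁ n₂ φ d n := by
  have h1 : 1 ≤ d * (n + 1) := Nat.one_le_iff_ne_zero.2 (by positivity)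
  have h2 : d * (n + 1) - 1 + 1 = d * (n + 1) := by omega
  rw [hKl, h2, if_pos ⟨n + 1, rfl⟩, Nat.mul_div_cancel_left _ hd, Nat.add_sub_cancel]

lemma hKl_zero (m n₁ n₂ : ℕ) (φ : ℝ → ℂ) {d : ℕ} (hd : 0 < d) :
    ∀ x ∉ Set.range (fun n => d * (n + 1) - 1), hKl m n₁ n₂ φ d x = 0 := by
  intro x hx
  rw [hKl, if_neg]
  intro hdvd
  apply hx
  obtain ⟨c, hc⟩ := hdvd
  have hc1 : 1 ≤ c := by
    rcases Nat.eq_zero_or_pos c with h | h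
    · subst h
      simp at hc
    · exact h
  refine ⟨c - 1, ?_⟩
  simp only
  rw [show c - 1 + 1 = c from by omega]
  omega

lemma f_eq (m n₁ n₂ : ℕ) (hm : 0 < m) (φ : ℝ → ℂ) (q : ℕ) :
    Kl (m:ℤ) (n₁:ℤ) (n₂:ℤ) (q+1) / ((q+1:ℕ):ℂ) *
      φ (4 * Real.pi * Real.sqrt ((m:ℝ) * n₁ * n₂) / ((q:ℝ)+1))
    = ∑ d ∈ (Nat.gcd m n₁).divisors, hKl m n₁ n₂ φ d q := by
  rw [selberg hm (Nat.succ_pos q), Finset.sum_div, Finset.sum_mul]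
  refine Finset.sum_congr rfl (fun d hd => ?_)
  have hd0 : 0 < d := Nat.pos_of_mem_divisors hd
  rw [hKl]
  by_cases hdvd : d ∣ q + 1
  · rw [if_pos hdvd, if_pos hdvd]
    set q'' := (q+1)/d with hq''
    have hq1 : q + 1 = d * q'' := (Nat.mul_div_cancel' hdvd).symm
    have hq''pos : 0 < q'' := Nat.div_pos (Nat.le_of_dvd (Nat.succ_pos q) hdvd) hd0
    have hs : q'' - 1 + 1 = q'' := by omega
    rw [gKl, hs]
    have hr : ((q'' - 1 : ℕ):ℝ) + 1 = (q'':ℝ) := by exact_mod_cast hs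
    rw [hr]
    have hC : ((q+1:ℕ):ℂ) = (d:ℂ) * (q'':ℂ) := by rw [hq1]; push_cast; ring
    have hR : (q:ℝ) + 1 = (q'':ℝ) * (d:ℝ) := by
      have h2 : ((q+1:ℕ):ℝ) = ((d * q'' : ℕ):ℝ) := by rw [← hq1]
      push_cast at h2
      linarith
    rw [hC, hR]
    have hdC : (d:ℂ) ≠ 0 := by exact_mod_cast hd0.ne'
    have hqC : (q'':ℂ) ≠ 0 := by exact_mod_cast hq''pos.ne'
    field_simp
  · rw [if_neg hdvd, if_neg hdvd, zero_div, zero_mul]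

theorem kloosterman_sum_rearrangement (m n₁ n₂ : ℕ)
    (hm : 0 < m) (hn₁ : 0 < n₁) (hn₂ : 0 < n₂) (φ : ℝ → ℂ)
    (habs : ∀ d ∈ (Nat.gcd m n₁).divisors,
      Summable (fun q : ℕ =>
        ‖Kl 1 ((m * n₁ / d ^ 2 : ℕ) : ℤ) (n₂ : ℤ) (q + 1)‖ *
          ‖φ (4 * Real.pi * Real.sqrt ((m : ℝ) * n₁ * n₂) / (((q : ℝ) + 1) * d))‖ /
            ((q : ℝ) + 1))) :
    Summable (fun q : ℕ =>
      ‖Kl (m : ℤ) (n₁ : ℤ) (n₂ : ℤ) (q + 1) / ((q + 1 : ℕ) : ℂ) *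
        φ (4 * Real.pi * Real.sqrt ((m : ℝ) * n₁ * n₂) / ((q : ℝ) + 1))‖) ∧
    ∑' q : ℕ, Kl (m : ℤ) (n₁ : ℤ) (n₂ : ℤ) (q + 1) / ((q + 1 : ℕ) : ℂ) *
        φ (4 * Real.pi * Real.sqrt ((m : ℝ) * n₁ * n₂) / ((q : ℝ) + 1))
      = ∑ d ∈ (Nat.gcd m n₁).divisors, ∑' q : ℕ,
          Kl 1 ((m * n₁ / d ^ 2 : ℕ) : ℤ) (n₂ : ℤ) (q + 1) / ((q + 1 : ℕ) : ℂ) *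
            φ (4 * Real.pi * Real.sqrt ((m : ℝ) * n₁ * n₂) / (((q : ℝ) + 1) * d)) := by
  have hnorm : ∀ d q : ℕ, ‖gKl m n₁ n₂ φ d q‖
      = ‖Kl 1 ((m * n₁ / d ^ 2 : ℕ) : ℤ) (n₂ : ℤ) (q + 1)‖ *
          ‖φ (4 * Real.pi * Real.sqrt ((m : ℝ) * n₁ * n₂) / (((q : ℝ) + 1) * d))‖ /
            ((q : ℝ) + 1) := by
    intro d q
    rw [gKl, norm_mul, norm_div, Complex.norm_natCast]
    push_cast
    ring
  have hg_norm_sum : ∀ d ∈ (Nat.gcd m n₁).divisors,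
      Summable (fun q => ‖gKl m n₁ n₂ φ d q‖) := by
    intro d hd
    exact (habs d hd).congr fun q => (hnorm d q).symm
  have hh_norm_sum : ∀ d ∈ (Nat.gcd m n₁).divisors,
      Summable (fun q => ‖hKl m n₁ n₂ φ d q‖) := by
    intro d hd
    have hd0 : 0 < d := Nat.pos_of_mem_divisors hd
    have hinj := iota_inj hd0
    refine (hinj.summable_iff ?_).mp ?_
    · intro x hx
      rw [hKl_zero m n₁ n₂ φ hd0 x hx, norm_zero]
    · refine (hg_norm_sum d hd).congr fun n => ?_
      show ‖gKl m n₁ n₂ φ d n‖ = ‖hKl m n₁ n₂ φ d (d * (n + 1) - 1)‖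
      rw [hKl_comp m n₁ n₂ φ hd0 n]
  have hh_sum : ∀ d ∈ (Nat.gcd m n₁).divisors,
      Summable (fun q => hKl m n₁ n₂ φ d q) := fun d hd => (hh_norm_sum d hd).of_norm
  constructor
  · refine Summable.of_nonneg_of_le (fun q => norm_nonneg _) (fun q => ?_)
      (summable_sum (fun d hd => hh_norm_sum d hd))
    rw [f_eq m n₁ n₂ hm φ q]
    exact norm_sum_le _ _
  · calc ∑' q : ℕ, Kl (m : ℤ) (n₁ : ℤ) (n₂ : ℤ) (q + 1) / ((q + 1 : ℕ) : ℂ) *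
        φ (4 * Real.pi * Real.sqrt ((m : ℝ) * n₁ * n₂) / ((q : ℝ) + 1))
        = ∑' q : ℕ, ∑ d ∈ (Nat.gcd m n₁).divisors, hKl m n₁ n₂ φ d q :=
          tsum_congr (f_eq m n₁ n₂ hm φ)
      _ = ∑ d ∈ (Nat.gcd m n₁).divisors, ∑' q : ℕ, hKl m n₁ n₂ φ d q :=
          Summable.tsum_finsetSum (fun d hd => hh_sum d hd)
      _ = ∑ d ∈ (Nat.gcd m n₁).divisors, ∑' n : ℕ, gKl m n₁ n₂ φ d n := by
          refine Finset.sum_congr rfl (fun d hd => ?_)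
          have hd0 : 0 < d := Nat.pos_of_mem_divisors hd
          rw [← (iota_inj hd0).tsum_eq (f := fun q => hKl m n₁ n₂ φ d q) ?_]
          · exact (tsum_congr (fun n => hKl_comp m n₁ n₂ φ hd0 n))
          · intro x hx
            by_contra hxr
            exact hx (hKl_zero m n₁ n₂ φ hd0 x hxr)
      _ = _ := by
          refine Finset.sum_congr rfl (fun d hd => ?_)
          exact tsum_congr (fun n => rfl)
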